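/- Let 1 < ν < 2, integers b ≥ a + 1, reals α, β, γ, δ ≥ 0 with β ≥ α, and ξ = (β-α)γ + αγ H_{ν-1}(b,a) + αδ H_{ν-2}(b,a) > 0. Define u(t,s) = (1/ξ)[αγ H_{ν-1}(t,a)H_{ν-1}(b,s-1) + αδ H_{ν-1}(t,a)H_{ν-2}(b,s-1) + (β-α)γ H_{ν-1}(b,s-1) + (β-α)δ H_{ν-2}(b,s-1)]. Then u(t,s) ≥ 0 for all integers t ∈ [a, b] and s ∈ [a+1, b] with t ≤ s - 1. -/
import Mathlib


noncomputable def H (μ : ℝ) (t a : ℤ) : ℝ :=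
  Real.Gamma ((t : ℝ) - a + μ) / (Real.Gamma ((t : ℝ) - a) * Real.Gamma (μ + 1))

noncomputable def xiBVP (ν : ℝ) (a b : ℤ) (α β γ δ : ℝ) : ℝ :=
  (β - α) * γ + α * γ * H (ν - 1) b a + α * δ * H (ν - 2) b a

noncomputable def uG (ν : ℝ) (a b : ℤ) (α β γ δ : ℝ) (t s : ℤ) : ℝ :=
  (1 / xiBVP ν a b α β γ δ) *
    (α * γ * H (ν - 1) t a * H (ν - 1) b (s - 1)
      + α * δ * H (ν - 1) t a * H (ν - 2) b (s - 1)
      + (β - α) * γ * H (ν - 1) b (s - 1)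
      + (β - α) * δ * H (ν - 2) b (s - 1))

noncomputable def vG (ν : ℝ) (a b : ℤ) (α β γ δ : ℝ) (t s : ℤ) : ℝ :=
  uG ν a b α β γ δ t s - H (ν - 1) t (s - 1)

noncomputable def GG (ν : ℝ) (a b : ℤ) (α β γ δ : ℝ) (t s : ℤ) : ℝ :=
  if t ≤ s - 1 then uG ν a b α β γ δ t s else vG ν a b α β γ δ t s


lemma H_nonneg {μ : ℝ} (hμ : -1 < μ) {t a : ℤ} (h : a ≤ t) : 0 ≤ H μ t a := by
  rcases eq_or_lt_of_le h with h' | h'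
  · subst h'
    simp [H, Real.Gamma_zero]
  · have h1 : (1 : ℝ) ≤ (t : ℝ) - a := by
      have : a + 1 ≤ t := h'
      have : ((a : ℝ) + 1 : ℝ) ≤ (t : ℝ) := by exact_mod_cast this
      linarith
    have g1 : 0 < Real.Gamma ((t : ℝ) - a + μ) :=
      Real.Gamma_pos_of_pos (by linarith)
    have g2 : 0 < Real.Gamma ((t : ℝ) - a) :=
      Real.Gamma_pos_of_pos (by linarith)
    have g3 : 0 < Real.Gamma (μ + 1) :=
      Real.Gamma_pos_of_pos (by linarith)
    exact le_of_lt (div_pos g1 (mul_pos g2 g3))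

theorem u_nonneg (ν : ℝ) (hν1 : 1 < ν) (hν2 : ν < 2) (a b : ℤ) (hab : a + 1 ≤ b)
    (α β γ δ : ℝ) (hα : 0 ≤ α) (hβ : 0 ≤ β) (hγ : 0 ≤ γ) (hδ : 0 ≤ δ)
    (hba : α ≤ β) (hξ : 0 < xiBVP ν a b α β γ δ)
    (t s : ℤ) (hta : a ≤ t) (htb : t ≤ b) (hsa : a + 1 ≤ s) (hsb : s ≤ b)
    (hts : t ≤ s - 1) :
    0 ≤ uG ν a b α β γ δ t s := by
  have h1 : 0 ≤ H (ν - 1) t a := H_nonneg (by linarith) hta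
  have h2 : 0 ≤ H (ν - 1) b (s - 1) := H_nonneg (by linarith) (by linarith)
  have h3 : 0 ≤ H (ν - 2) b (s - 1) := H_nonneg (by linarith) (by linarith)
  have hβα : 0 ≤ β - α := by linarith
  unfold uG
  apply mul_nonneg (le_of_lt (by positivity))
  positivity
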